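/- Theorem 3: For all r = 2^m, s = 2^n with m, n ≥ 1, and for every d ∈ F_{r^2} \ F_r, there exists c ∈ F_{r^2} such that for every nonzero a ∈ F_{r^2}, the map x ↦ F(x+a) + F(x) is 2^k-to-one on F_{r^2}, where k = gcd(m,n) and F(x) = x(x^s + x^r + c x^{rs}) + x^s(c^r x^r + d x^{rs}) + x^{(s+1)r}. -/

import Mathlib

open Finset Polynomial

lemma natSq {a : ℕ} (h : 1 ≤ a) : (a - 1) * (a + 1) = a * a - 1 := by
  obtain ⟨b, rfl⟩ := Nat.exists_eq_add_of_le h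
  have h1 : (1 + b) * (1 + b) = b * (1 + b + 1) + 1 := by ring
  rw [h1]
  have h2 : 1 + b - 1 = b := by omega
  rw [h2, Nat.add_sub_cancel]

lemma two_pow_sub_one_dvd (k t : ℕ) : (2 ^ k - 1 : ℕ) ∣ (2 ^ (k * t) - 1) := by
  have h := sub_dvd_pow_sub_pow ((2 : ℤ) ^ k) 1 t
  rw [one_pow, ← pow_mul] at h
  have h1 : (1 : ℕ) ≤ 2 ^ k := Nat.one_le_two_pow
  have h2 : (1 : ℕ) ≤ 2 ^ (k * t) := Nat.one_le_two_pow
  rw [← Int.natCast_dvd_natCast]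
  push_cast [h1, h2]
  exact h

lemma nt_dvd_imp (m n : ℕ) (hm : 1 ≤ m) (hn : 1 ≤ n)
    (H : (2 ^ m + 1 : ℕ) ∣ (2 ^ (2 * n) - 1)) : m ∣ n := by
  set D := 2 ^ m + 1 with hD
  have h2m : (2 : ℕ) ≤ 2 ^ m := by
    calc (2 : ℕ) = 2 ^ 1 := rfl
    _ ≤ 2 ^ m := Nat.pow_le_pow_right (by norm_num) hm
  have hdvd2 : (2 : ℕ) ∣ 2 ^ m := dvd_pow_self 2 (by omega)
  have hcop : Nat.Coprime 2 D := by
    refine (Nat.prime_two.coprime_iff_not_dvd).mpr ?_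
    omega
  haveI : NeZero D := ⟨by omega⟩
  set u : (ZMod D)ˣ := ZMod.unitOfCoprime 2 hcop with hu
  have huval : (u : ZMod D) = ((2 : ℕ) : ZMod D) := by
    rw [hu, ZMod.coe_unitOfCoprime]
  have key : ∀ t : ℕ, (D ∣ 2 ^ t - 1) ↔ u ^ t = 1 := by
    intro t
    have h1t : 1 ≤ 2 ^ t := Nat.one_le_two_pow
    have hcast : ((2 ^ t : ℕ) : ZMod D) = ((u : ZMod D)) ^ t := by
      rw [huval]; push_cast; ring
    constructor
    · intro h
      have hmod : (1 : ℕ) ≡ 2 ^ t [MOD D] := (Nat.modEq_iff_dvd' h1t).mpr h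
      have hc : ((1 : ℕ) : ZMod D) = ((2 ^ t : ℕ) : ZMod D) :=
        (ZMod.natCast_eq_natCast_iff _ _ _).mpr hmod
      apply Units.ext
      rw [Units.val_pow_eq_pow_val, Units.val_one, ← hcast, ← hc, Nat.cast_one]
    · intro h
      have hc : ((2 ^ t : ℕ) : ZMod D) = ((1 : ℕ) : ZMod D) := by
        rw [hcast, ← Units.val_pow_eq_pow_val, h, Units.val_one, Nat.cast_one]
      have hmod : (2 ^ t : ℕ) ≡ 1 [MOD D] := (ZMod.natCast_eq_natCast_iff _ _ _).mp hc
      exact (Nat.modEq_iff_dvd' h1t).mp hmod.symm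
  have h2mm : D ∣ 2 ^ (2 * m) - 1 := by
    have he : (2 ^ m - 1) * D = 2 ^ (2 * m) - 1 := by
      rw [hD, natSq (by omega : 1 ≤ 2 ^ m)]
      congr 1
      rw [two_mul, pow_add]
    exact Dvd.intro_left _ he
  have hum : u ^ (2 * m) = 1 := (key (2 * m)).mp h2mm
  have hun : u ^ (2 * n) = 1 := (key (2 * n)).mp H
  set k := Nat.gcd m n with hk
  have hord : orderOf u ∣ 2 * k := by
    have h1 := orderOf_dvd_of_pow_eq_one hum
    have h2 := orderOf_dvd_of_pow_eq_one hun
    have h3 := Nat.dvd_gcd h1 h2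
    rwa [Nat.gcd_mul_left] at h3
  have huk : u ^ (2 * k) = 1 := orderOf_dvd_iff_pow_eq_one.mp hord
  have hdk : D ∣ 2 ^ (2 * k) - 1 := (key _).mpr huk
  have hk1 : 1 ≤ k := by
    have : k ≠ 0 := by
      intro h0
      rw [hk] at h0
      rcases Nat.gcd_eq_zero_iff.mp h0 with ⟨h0', _⟩
      omega
    omega
  have h2k2 : (2 : ℕ) ≤ 2 ^ (2 * k) := by
    calc (2 : ℕ) = 2 ^ 1 := rfl
    _ ≤ 2 ^ (2 * k) := Nat.pow_le_pow_right (by norm_num) (by omega)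
  have hle : D ≤ 2 ^ (2 * k) - 1 := Nat.le_of_dvd (by omega) hdk
  have hpow : (2 : ℕ) ^ m < 2 ^ (2 * k) := by omega
  have hmlt : m < 2 * k := (Nat.pow_lt_pow_iff_right (by norm_num : 1 < 2)).mp hpow
  have hkm : k ∣ m := by rw [hk]; exact Nat.gcd_dvd_left m n
  obtain ⟨j, hj⟩ := hkm
  have hjne : j ≠ 0 := by
    intro h0; rw [h0, Nat.mul_zero] at hj; omega
  have hjlt : k * j < k * 2 := by omega
  have hj1 : j = 1 := by
    have := Nat.lt_of_mul_lt_mul_left hjlt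
    omega
  have hmk : m = k := by rw [hj, hj1, Nat.mul_one]
  rw [hmk, hk]
  exact Nat.gcd_dvd_right m n

-- iterate frobenius
lemma pow_two_pow_iter {K : Type} [Monoid K] (t j : ℕ) (x : K) (h : x ^ (2 ^ t) = x) :
    x ^ (2 ^ (t * j)) = x := by
  induction j with
  | zero => simp
  | succ j ih =>
    have he : (2 : ℕ) ^ (t * (j + 1)) = 2 ^ (t * j) * 2 ^ t := by
      rw [← pow_add, Nat.mul_succ]
    rw [he, pow_mul, ih, h]

lemma pow_two_pow_gcd {K : Type} [Monoid K] (m n : ℕ) (x : K)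
    (h1 : x ^ (2 ^ m) = x) (h2 : x ^ (2 ^ n) = x) : x ^ (2 ^ Nat.gcd m n) = x := by
  induction m, n using Nat.gcd.induction generalizing x with
  | H0 n => simpa using h2
  | H1 m n hm ih =>
    rw [Nat.gcd_rec]
    apply ih
    · have hdm : x ^ (2 ^ (m * (n / m))) = x := pow_two_pow_iter m (n / m) x h1
      have he : (2 : ℕ) ^ n = 2 ^ (m * (n / m)) * 2 ^ (n % m) := by
        rw [← pow_add]
        congr 1
        exact (Nat.div_add_mod n m).symm
      rw [he, pow_mul, hdm] at h2
      exact h2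
    · exact h1


section Counting

variable {K : Type} [Field K] [Fintype K] [DecidableEq K]

/-- number of t-th roots of unity, when t ∣ q - 1 -/
lemma card_pow_eq_one {t : ℕ} (ht0 : t ≠ 0) (ht : t ∣ Fintype.card K - 1) :
    (univ.filter fun x : K => x ^ t = 1).card = t := by
  set Q := Fintype.card K with hQdef
  have hQ2 : 1 < Q := Fintype.one_lt_card
  set f : K[X] := X ^ t - C 1 with hf
  have hf0 : f ≠ 0 := X_pow_sub_C_ne_zero (Nat.pos_of_ne_zero ht0) 1
  obtain ⟨e, he⟩ := ht
  have hdvd1 : f ∣ X ^ (Q - 1) - C 1 := by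
    have h := sub_dvd_pow_sub_pow ((X : K[X]) ^ t) (C 1) e
    rw [← pow_mul, ← he] at h
    have hC : (C (1:K)) ^ e = C 1 := by rw [map_one, one_pow]
    rwa [hC] at h
  have hdvd : f ∣ X ^ Q - X := by
    have hXQ : (X : K[X]) ^ Q - X = (X ^ (Q - 1) - C 1) * X := by
      rw [sub_mul, ← pow_succ, Nat.sub_add_cancel hQ2.le, map_one, one_mul]
    rw [hXQ]
    exact hdvd1.mul_right X
  have hne : (X ^ Q - X : K[X]) ≠ 0 := FiniteField.X_pow_card_sub_X_ne_zero K hQ2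
  obtain ⟨h, hh⟩ := hdvd
  have hh0 : h ≠ 0 := by
    intro h0; rw [h0, mul_zero] at hh; exact hne hh
  have hdegf : f.natDegree = t := natDegree_X_pow_sub_C
  have hdegQ : (X ^ Q - X : K[X]).natDegree = Q := FiniteField.X_pow_card_sub_X_natDegree_eq K hQ2
  have hdegh : t + h.natDegree = Q := by
    have := natDegree_mul hf0 hh0
    rw [← hh, hdegQ, hdegf] at this
    omega
  have hrootsQ : (X ^ Q - X : K[X]).roots = Finset.univ.val := FiniteField.roots_X_pow_card_sub_X K
  have hcardQ : Multiset.card (X ^ Q - X : K[X]).roots = Q := by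
    rw [hrootsQ]; exact Finset.card_univ
  have hsum : Multiset.card f.roots + Multiset.card h.roots = Q := by
    have := roots_mul (hh ▸ hne)
    rw [← hh] at this
    rw [this, Multiset.card_add] at hcardQ
    exact hcardQ
  have hlef : Multiset.card f.roots ≤ t := hdegf ▸ card_roots' f
  have hleh : Multiset.card h.roots ≤ h.natDegree := card_roots' h
  have hcardf : Multiset.card f.roots = t := by omega
  have hnodup : f.roots.Nodup := by
    have hle : f.roots ≤ (X ^ Q - X : K[X]).roots := roots.le_of_dvd hne ⟨h, hh⟩
    have : (Finset.univ.val : Multiset K).Nodup := Finset.univ.nodup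
    exact Multiset.nodup_of_le (hrootsQ ▸ hle) this
  have hset : univ.filter (fun x : K => x ^ t = 1) = f.roots.toFinset := by
    ext x
    simp only [mem_filter, mem_univ, true_and, Multiset.mem_toFinset]
    rw [mem_roots hf0]
    simp [hf, IsRoot, sub_eq_zero]
  rw [hset, Multiset.toFinset_card_of_nodup hnodup, hcardf]

/-- count of solutions of x^t = x when 2 ≤ t and t-1 ∣ q-1 -/
lemma card_pow_eq_self {t : ℕ} (ht : 2 ≤ t) (hdvd : (t - 1) ∣ Fintype.card K - 1) :
    (univ.filter fun x : K => x ^ t = x).card = t := by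
  have ht1 : t - 1 + 1 = t := by omega
  have hset : (univ.filter fun x : K => x ^ t = x)
      = insert (0 : K) (univ.filter fun x : K => x ^ (t - 1) = 1) := by
    ext x
    simp only [mem_filter, mem_univ, true_and, mem_insert]
    constructor
    · intro hx
      by_cases hx0 : x = 0
      · exact Or.inl hx0
      · right
        have : x ^ (t - 1) * x = 1 * x := by
          rw [one_mul, ← pow_succ, ht1]; exact hx
        exact mul_right_cancel₀ hx0 this
    · rintro (rfl | hx)
      · rw [zero_pow (by omega : t ≠ 0)]
      · rw [← ht1, pow_succ, hx, one_mul]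
  have h0notin : (0 : K) ∉ (univ.filter fun x : K => x ^ (t - 1) = 1) := by
    simp only [mem_filter, mem_univ, true_and]
    rw [zero_pow (by omega : t - 1 ≠ 0)]
    exact zero_ne_one
  rw [hset, Finset.card_insert_of_notMem h0notin, card_pow_eq_one (by omega) hdvd]
  omega

/-- in Kˣ cyclic: solve x^t = w given w^u = 1 and q - 1 = t*u -/
lemma exists_pow_eq {t u : ℕ} (htu : Fintype.card K - 1 = t * u) (hu : u ≠ 0)
    {w : K} (hw : w ^ u = 1) : ∃ x : K, x ≠ 0 ∧ x ^ t = w := by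
  have hw0 : w ≠ 0 := by
    rintro rfl; rw [zero_pow hu] at hw; exact zero_ne_one hw
  obtain ⟨g, hg⟩ := IsCyclic.exists_generator (α := Kˣ)
  have hord : orderOf g = Fintype.card K - 1 := by
    rw [orderOf_eq_card_of_forall_mem_zpowers hg, Nat.card_eq_fintype_card, Fintype.card_units]
  obtain ⟨i, hi⟩ : ∃ i : ℕ, g ^ i = Units.mk0 w hw0 := by
    have h1 := hg (Units.mk0 w hw0)
    rwa [← mem_powers_iff_mem_zpowers, Submonoid.mem_powers_iff] at h1
  have h1 : g ^ (i * u) = 1 := by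
    rw [pow_mul, hi]
    apply Units.ext
    rw [Units.val_pow_eq_pow_val, Units.val_one, Units.val_mk0, hw]
  have h2 : t * u ∣ i * u := by
    rw [← htu, ← hord]
    exact orderOf_dvd_of_pow_eq_one h1
  have h3 : t ∣ i := by
    rcases Nat.eq_zero_or_pos u with h | h
    · omega
    · exact (Nat.mul_dvd_mul_iff_right h).mp h2
  obtain ⟨j, hj⟩ := h3
  refine ⟨((g ^ j : Kˣ) : K), Units.ne_zero _, ?_⟩
  have : ((g ^ j : Kˣ) : K) ^ t = (((g ^ j) ^ t : Kˣ) : K) :=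
    (Units.val_pow_eq_pow_val _ _).symm
  rw [this, ← pow_mul, mul_comm j t, ← hj, hi, Units.val_mk0]

/-- fibers of an additive map over its image all have kernel cardinality -/
lemma fiber_card {f : K → K} (hadd : ∀ x y, f (x + y) = f x + f y)
    {y₀ : K} (hy : ∃ x₀, f x₀ = y₀) :
    (univ.filter fun x => f x = y₀).card = (univ.filter fun x => f x = 0).card := by
  obtain ⟨x₀, hx₀⟩ := hy
  have hsub : ∀ x y, f (x - y) = f x - f y := by
    intro x y
    have h := hadd (x - y) y
    rw [sub_add_cancel] at h
    rw [h]; ring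
  refine (Finset.card_bij (fun w _ => w + x₀) ?_ ?_ ?_).symm
  · intro a ha
    simp only [mem_filter, mem_univ, true_and] at ha ⊢
    rw [hadd, ha, hx₀, zero_add]
  · intro a₁ _ a₂ _ h
    exact add_right_cancel h
  · intro b hb
    simp only [mem_filter, mem_univ, true_and] at hb
    refine ⟨b - x₀, ?_, by ring⟩
    simp only [mem_filter, mem_univ, true_and]
    rw [hsub, hb, hx₀, sub_self]

lemma image_card_mul {f : K → K} (hadd : ∀ x y, f (x + y) = f x + f y) :
    (univ.image f).card * (univ.filter fun x => f x = 0).card = Fintype.card K := by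
  have h := Finset.card_eq_sum_card_image f (univ : Finset K)
  rw [Finset.card_univ] at h
  have hcongr : ∀ b ∈ univ.image f,
      (univ.filter fun a => f a = b).card = (univ.filter fun x => f x = 0).card := by
    intro b hb
    obtain ⟨x₀, _, hx₀⟩ := Finset.mem_image.mp hb
    exact fiber_card hadd ⟨x₀, hx₀⟩
  rw [Finset.sum_congr rfl hcongr, Finset.sum_const, smul_eq_mul] at h
  exact h.symm

end Counting


lemma char_two_of_card {K : Type} [Field K] [Fintype K] {m : ℕ} (hm : 1 ≤ m)
    (hcard : Fintype.card K = 2 ^ (2 * m)) : CharP K 2 := by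
  obtain ⟨p, hp, hc⟩ := FiniteField.card K (ringChar K)
  have hdvd : ringChar K ∣ 2 ^ (2 * m) := by
    rw [← hcard, hc]
    exact dvd_pow_self _ (by exact_mod_cast p.pos.ne')
  have h2 : ringChar K = 2 :=
    (Nat.prime_dvd_prime_iff_eq hp Nat.prime_two).mp (hp.dvd_of_dvd_pow hdvd)
  rw [← h2]
  exact ringChar.charP K

theorem exists_good_c (m n : ℕ) (hm : 1 ≤ m) (hn : 1 ≤ n) (hmn : ¬ m ∣ n)
    (K : Type) [Field K] [Fintype K] (hcard : Fintype.card K = 2 ^ (2 * m)) :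
    ∃ c : K, ∀ z : K, z ^ (2 ^ m + 1) = 1 →
      z ^ (2 ^ n + 1) + c * z ^ (2 ^ n) + c ^ (2 ^ m) * z + 1 ≠ 0 := by
  classical
  haveI hch : CharP K 2 := char_two_of_card hm hcard
  haveI : Fact (Nat.Prime 2) := ⟨Nat.prime_two⟩
  have htwo : (2 : K) = 0 := by
    have h := CharP.cast_eq_zero K 2
    exact_mod_cast h
  set r := 2 ^ m with hr
  set s := 2 ^ n with hs
  have hr2 : 2 ≤ r := by
    rw [hr]
    calc (2:ℕ) = 2^1 := rfl
    _ ≤ 2^m := Nat.pow_le_pow_right (by norm_num) hm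
  have hs2 : 2 ≤ s := by
    rw [hs]
    calc (2:ℕ) = 2^1 := rfl
    _ ≤ 2^n := Nat.pow_le_pow_right (by norm_num) hn
  have h2r : (2:ℕ) ∣ r := by rw [hr]; exact dvd_pow_self 2 (by omega)
  have hfr : ∀ x y : K, (x + y) ^ r = x ^ r + y ^ r := by
    intro x y; rw [hr]; exact add_pow_char_pow x y 2 m
  have hrr : r * r = 2 ^ (2 * m) := by rw [hr, ← pow_add, two_mul]
  have hcardrr : Fintype.card K = r * r := by rw [hcard]; exact hrr.symm
  have hQ1 : Fintype.card K - 1 = (r - 1) * (r + 1) := by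
    rw [hcardrr, natSq (by omega : 1 ≤ r)]
  have hxrr : ∀ x : K, (x ^ r) ^ r = x := by
    intro x; rw [← pow_mul, ← hcardrr]; exact FiniteField.pow_card x
  set U : Finset K := univ.filter (fun z : K => z ^ (r + 1) = 1) with hU
  have hUcard : U.card = r + 1 :=
    card_pow_eq_one (by omega) ⟨r - 1, by rw [hQ1]; ring⟩
  by_contra hno
  push_neg at hno
  set ncnt : K → ℕ := fun c => (U.filter fun z => z ^ (s+1) + c * z ^ s + c ^ r * z + 1 = 0).card
    with hncnt
  have hpos : ∀ c : K, 1 ≤ ncnt c := by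
    intro c
    obtain ⟨z, hz1, hz2⟩ := hno c
    simp only [hncnt]
    refine Finset.card_pos.mpr ⟨z, ?_⟩
    simp only [hU, mem_filter, mem_univ, true_and]
    exact ⟨hz1, hz2⟩
  have hFr_card : (univ.filter fun mu : K => mu ^ r = mu).card = r :=
    card_pow_eq_self (by omega) (by rw [hQ1]; exact ⟨r + 1, rfl⟩)
  -- per-z bad count = r
  have hbad : ∀ z ∈ U, (univ.filter fun cc : K => z ^ (s+1) + cc * z ^ s + cc ^ r * z + 1 = 0).card = r := by
    intro z hz
    have hz1 : z ^ (r + 1) = 1 := (mem_filter.mp hz).2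
    have hz0 : z ≠ 0 := by
      rintro rfl
      rw [zero_pow (by omega : r + 1 ≠ 0)] at hz1
      exact zero_ne_one hz1
    have hzper : ∀ t : ℕ, z ^ (t + (r + 1)) = z ^ t := by
      intro t; rw [pow_add, hz1, mul_one]
    have hzper2 : ∀ t j : ℕ, z ^ (t + j * (r + 1)) = z ^ t := by
      intro t j
      rw [pow_add, mul_comm j, pow_mul, hz1, one_pow, mul_one]
    set ψ : K → K := fun cc => cc * z ^ s + cc ^ r * z with hψ
    have hadd : ∀ x y, ψ (x + y) = ψ x + ψ y := by
      intro x y; simp only [hψ]; rw [hfr]; ring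
    have hwU : (z ^ (s - 1)) ^ (r + 1) = 1 := by
      rw [← pow_mul, mul_comm, pow_mul, hz1, one_pow]
    obtain ⟨c₀, hc₀0, hc₀⟩ := exists_pow_eq (t := r - 1) (u := r + 1) hQ1 (by omega) hwU
    have hr1 : r - 1 + 1 = r := by omega
    have hs1 : s - 1 + 1 = s := by omega
    have hc₀r : c₀ ^ r = c₀ * z ^ (s - 1) := by
      rw [← hr1, pow_succ, hc₀, mul_comm]
    have hzs1 : z ^ (s - 1) * z = z ^ s := by rw [← pow_succ, hs1]
    have hker_eq : (univ.filter fun cc : K => ψ cc = 0)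
        = (univ.filter fun mu : K => mu ^ r = mu).image (fun mu => c₀ * mu) := by
      ext cc
      simp only [mem_filter, mem_univ, true_and, mem_image]
      constructor
      · intro hcc
        refine ⟨cc / c₀, ?_, by field_simp⟩
        have hccr : cc ^ r * z = cc * z ^ s := by
          have h := hcc
          simp only [hψ] at h
          linear_combination h - (cc * z ^ s) * htwo
        rw [div_pow, div_eq_div_iff (pow_ne_zero _ hc₀0) hc₀0, hc₀r]
        have h3 : cc ^ r * z = cc * z ^ (s - 1) * z := by
          rw [mul_assoc, hzs1]; exact hccr
        have h4 : cc ^ r = cc * z ^ (s - 1) := mul_right_cancel₀ hz0 h3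
        rw [h4]; ring
      · rintro ⟨mu, hmu, rfl⟩
        simp only [hψ]
        rw [mul_pow, hc₀r, hmu]
        have he : c₀ * mu * z ^ s + c₀ * z ^ (s - 1) * mu * z
            = mu * (c₀ * z ^ s + c₀ * (z ^ (s - 1) * z)) := by ring
        rw [he, hzs1, CharTwo.add_self_eq_zero, mul_zero]
    have hker_card : (univ.filter fun cc : K => ψ cc = 0).card = r := by
      rw [hker_eq, Finset.card_image_of_injective _ (mul_right_injective₀ hc₀0), hFr_card]
    have himgmul := image_card_mul hadd
    have himg_card : (univ.image ψ).card = r := by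
      rw [hker_card, hcardrr] at himgmul
      exact Nat.eq_of_mul_eq_mul_right (by omega) himgmul
    have hz0s : z ^ (s + 1) ≠ 0 := pow_ne_zero _ hz0
    have hwY : ((z ^ (s + 1))⁻¹) ^ (r + 1) = 1 := by
      rw [← inv_pow, ← pow_mul, mul_comm (s + 1), pow_mul, inv_pow, hz1, inv_one, one_pow]
    obtain ⟨y₁, hy₁0, hy₁⟩ := exists_pow_eq (t := r - 1) (u := r + 1) hQ1 (by omega) hwY
    have hy₁r : y₁ ^ r * z ^ (s + 1) = y₁ := by
      rw [← hr1, pow_succ, hy₁]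
      field_simp
    have hYsub : ∀ y : K, y ∈ univ.image ψ → y ^ r * z ^ (s + 1) = y := by
      intro y hy
      obtain ⟨cc, _, rfl⟩ := mem_image.mp hy
      simp only [hψ]
      have e1 : (z ^ s) ^ r * z ^ (s + 1) = z := by
        rw [← pow_mul, ← pow_add]
        have he : s * r + (s + 1) = 1 + s * (r + 1) := by ring
        rw [he, hzper2 1 s, pow_one]
      have e2 : z ^ r * z ^ (s + 1) = z ^ s := by
        rw [← pow_add]
        have he : r + (s + 1) = s + (r + 1) := by ring
        rw [he, hzper]
      rw [hfr, mul_pow, mul_pow, hxrr, add_mul, mul_assoc, mul_assoc, e1, e2]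
      ring
    set Y : Finset K := univ.filter (fun y : K => y ^ r * z ^ (s + 1) = y) with hYdef
    have hY_eq : Y = (univ.filter fun mu : K => mu ^ r = mu).image (fun mu => y₁ * mu) := by
      ext y
      simp only [hYdef, mem_filter, mem_univ, true_and, mem_image]
      constructor
      · intro hy
        refine ⟨y / y₁, ?_, by field_simp⟩
        have h1 : y ^ r = y * (z ^ (s + 1))⁻¹ := by
          field_simp
          exact hy
        have h2 : y₁ ^ r = y₁ * (z ^ (s + 1))⁻¹ := by
          field_simp
          exact hy₁r
        rw [div_pow, div_eq_div_iff (pow_ne_zero _ hy₁0) hy₁0, h1, h2]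
        ring
      · rintro ⟨mu, hmu, rfl⟩
        rw [mul_pow, hmu]
        calc y₁ ^ r * mu * z ^ (s + 1) = (y₁ ^ r * z ^ (s + 1)) * mu := by ring
        _ = y₁ * mu := by rw [hy₁r]
    have hY_card : Y.card = r := by
      rw [hY_eq, Finset.card_image_of_injective _ (mul_right_injective₀ hy₁0), hFr_card]
    have himg_eq : univ.image ψ = Y := by
      apply Finset.eq_of_subset_of_card_le
      · intro y hy
        simp only [hYdef, mem_filter, mem_univ, true_and]
        exact hYsub y hy
      · rw [hY_card, himg_card]
    have hy₀Y : z ^ (s + 1) + 1 ∈ Y := by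
      simp only [hYdef, mem_filter, mem_univ, true_and]
      rw [hfr, one_pow]
      have e3 : (z ^ (s + 1)) ^ r * z ^ (s + 1) = 1 := by
        rw [← pow_mul, ← pow_add]
        have he : (s + 1) * r + (s + 1) = 0 + (s + 1) * (r + 1) := by ring
        rw [he, hzper2 0 (s + 1), pow_zero]
      rw [add_mul, e3, one_mul]
      ring
    obtain ⟨x₀, _, hx₀⟩ := mem_image.mp (himg_eq ▸ hy₀Y)
    have hfiber := fiber_card hadd ⟨x₀, hx₀⟩
    have hgp_eq : (univ.filter fun cc : K => z ^ (s+1) + cc * z ^ s + cc ^ r * z + 1 = 0)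
        = univ.filter fun cc : K => ψ cc = z ^ (s + 1) + 1 := by
      apply Finset.filter_congr
      intro cc _
      simp only [hψ]
      constructor
      · intro h
        linear_combination h - (z ^ (s + 1) + 1) * htwo
      · intro h
        linear_combination h + (z ^ (s + 1) + 1) * htwo
    rw [hgp_eq, hfiber, hker_card]
  -- total sum
  have hsum_total : ∑ c : K, ncnt c = (r + 1) * r := by
    have h1 : ∀ c : K, ncnt c = ∑ z ∈ U, (if z ^ (s+1) + c * z ^ s + c ^ r * z + 1 = 0 then 1 else 0) := by
      intro c
      simp only [hncnt]
      rw [Finset.card_filter]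
    rw [Finset.sum_congr rfl (fun c _ => h1 c), Finset.sum_comm]
    have h2 : ∀ z ∈ U, (∑ c : K, if z ^ (s+1) + c * z ^ s + c ^ r * z + 1 = 0 then 1 else 0) = r := by
      intro z hz
      rw [← Finset.card_filter]
      exact hbad z hz
    rw [Finset.sum_congr rfl h2, Finset.sum_const, smul_eq_mul, hUcard]
  set A₂ : Finset K := univ.filter (fun cc : K => cc ^ r = cc) with hA₂
  have hA₂card : A₂.card = r := hFr_card
  have hA₂z : ∀ z ∈ U, (A₂.filter fun cc => z ^ (s+1) + cc * z ^ s + cc ^ r * z + 1 = 0).card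
      = (if z = 1 then r else if z ^ s = z then 0 else 1) := by
    intro z hz
    have hz1 : z ^ (r + 1) = 1 := (mem_filter.mp hz).2
    have hzper : ∀ t : ℕ, z ^ (t + (r + 1)) = z ^ t := by
      intro t; rw [pow_add, hz1, mul_one]
    have hzper2 : ∀ t j : ℕ, z ^ (t + j * (r + 1)) = z ^ t := by
      intro t j
      rw [pow_add, mul_comm j, pow_mul, hz1, one_pow, mul_one]
    by_cases hzone : z = 1
    · subst hzone
      rw [if_pos rfl]
      have heq : A₂.filter (fun cc => (1:K) ^ (s+1) + cc * 1 ^ s + cc ^ r * 1 + 1 = 0) = A₂ := by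
        apply Finset.filter_true_of_mem
        intro cc hcc
        have hccr : cc ^ r = cc := (mem_filter.mp hcc).2
        simp only [one_pow, mul_one]
        linear_combination hccr + (cc + 1) * htwo
      rw [heq, hA₂card]
    · rw [if_neg hzone]
      by_cases hzs : z ^ s = z
      · rw [if_pos hzs, Finset.card_eq_zero, Finset.filter_eq_empty_iff]
        intro cc hcc
        have hccr : cc ^ r = cc := (mem_filter.mp hcc).2
        intro h0
        have hsq : (z + 1) ^ 2 = 0 := by
          linear_combination h0 - (z + cc) * hzs - z * hccr + (z - cc * z) * htwo
        have hz1' : z + 1 = 0 := pow_eq_zero_iff (by norm_num : 2 ≠ 0) |>.mp hsq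
        exact hzone (by linear_combination hz1' - htwo)
      · rw [if_neg hzs]
        have hden : z ^ s + z ≠ 0 := by
          intro h0
          exact hzs (by linear_combination h0 - z * htwo)
        set cz : K := (z ^ (s + 1) + 1) / (z ^ s + z) with hcz
        have hnum : (z ^ (s + 1) + 1) ^ r = z ^ ((s + 1) * r) + 1 := by
          rw [hfr, one_pow, ← pow_mul]
        have hden_r : (z ^ s + z) ^ r = z ^ (s * r) + z ^ r := by
          rw [hfr, ← pow_mul]
        have hcross : (z ^ ((s + 1) * r) + 1) * (z ^ s + z)
            = (z ^ (s + 1) + 1) * (z ^ (s * r) + z ^ r) := by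
          have h1 : z ^ (s * r + r + s) = z ^ r := by
            have he : s * r + r + s = r + s * (r + 1) := by ring
            rw [he, hzper2 r s]
          have h2 : z ^ (s * r + r + 1) = z ^ (s * r) := by
            have he : s * r + r + 1 = s * r + (r + 1) := by ring
            rw [he, hzper]
          have h3 : z ^ (s + 1 + r) = z ^ s := by
            have he : s + 1 + r = s + (r + 1) := by ring
            rw [he, hzper]
          have h4 : z ^ (s + 1 + s * r) = z := by
            have he : s + 1 + s * r = 1 + s * (r + 1) := by ring
            rw [he, hzper2 1 s, pow_one]
          linear_combination h1 + h2 - h3 - h4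
        have hdenr0 : z ^ (s * r) + z ^ r ≠ 0 := by
          intro h0
          apply hden
          have e1 : z ^ (s * r) * z ^ (s + 1) = z := by
            rw [← pow_add]
            have he : s * r + (s + 1) = 1 + s * (r + 1) := by ring
            rw [he, hzper2 1 s, pow_one]
          have e2 : z ^ r * z ^ (s + 1) = z ^ s := by
            rw [← pow_add]
            have he : r + (s + 1) = s + (r + 1) := by ring
            rw [he, hzper]
          calc z ^ s + z = (z ^ (s * r) + z ^ r) * z ^ (s + 1) := by
                rw [add_mul, e1, e2]; ring
          _ = 0 := by rw [h0, zero_mul]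
        have hcz_r : cz ^ r = cz := by
          rw [hcz, div_pow, hnum, hden_r, div_eq_div_iff hdenr0 hden]
          linear_combination hcross
        have hmul : cz * (z ^ s + z) = z ^ (s + 1) + 1 := div_mul_cancel₀ _ hden
        have hgpcz : z ^ (s+1) + cz * z ^ s + cz ^ r * z + 1 = 0 := by
          rw [hcz_r]
          linear_combination hmul + (z ^ (s + 1) + 1) * htwo
        have honeset : A₂.filter (fun cc => z ^ (s+1) + cc * z ^ s + cc ^ r * z + 1 = 0) = {cz} := by
          ext cc
          simp only [mem_filter, mem_singleton, hA₂, mem_univ, true_and]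
          constructor
          · rintro ⟨hccr, hgp⟩
            have hlin : cc * (z ^ s + z) = z ^ (s + 1) + 1 := by
              linear_combination hgp - z * hccr - (z ^ (s + 1) + 1) * htwo
            rw [hcz]
            exact (eq_div_iff hden).mpr hlin
          · rintro rfl
            exact ⟨hcz_r, hgpcz⟩
        rw [honeset, Finset.card_singleton]
  have h1U : (1 : K) ∈ U := by
    simp only [hU, mem_filter, mem_univ, true_and, one_pow]
  have hA₂sum : ∑ c ∈ A₂, ncnt c = r + (U.filter fun z => ¬ z ^ s = z).card := by
    have h1 : ∀ c ∈ A₂, ncnt c = ∑ z ∈ U, (if z ^ (s+1) + c * z ^ s + c ^ r * z + 1 = 0 then 1 else 0) := by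
      intro c _
      simp only [hncnt]
      rw [Finset.card_filter]
    rw [Finset.sum_congr rfl h1, Finset.sum_comm]
    have h2 : ∀ z ∈ U, (∑ c ∈ A₂, if z ^ (s+1) + c * z ^ s + c ^ r * z + 1 = 0 then 1 else 0)
        = (if z = 1 then r else if z ^ s = z then 0 else 1) := by
      intro z hz
      rw [← Finset.card_filter]
      exact hA₂z z hz
    rw [Finset.sum_congr rfl h2, ← Finset.add_sum_erase U _ h1U, if_pos rfl]
    congr 1
    have h3 : ∀ z ∈ U.erase 1, (if z = (1:K) then r else if z ^ s = z then 0 else 1)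
        = (if z ^ s = z then 0 else 1) := by
      intro z hz
      rw [if_neg (Finset.ne_of_mem_erase hz)]
    rw [Finset.sum_congr rfl h3, Finset.sum_ite, Finset.sum_const, Finset.sum_const,
      smul_eq_mul, smul_eq_mul, mul_zero, mul_one, zero_add]
    rw [Finset.filter_erase]
    rw [Finset.erase_eq_of_notMem (by simp : (1:K) ∉ U.filter fun z => ¬ z ^ s = z)]
  -- gcd filter counts
  have hgcd_filter : ∀ b : ℕ, (univ.filter fun x : K => x ^ (r + 1) = 1 ∧ x ^ b = 1)
      = univ.filter fun x : K => x ^ (Nat.gcd (r + 1) b) = 1 := by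
    intro b
    ext x
    simp only [mem_filter, mem_univ, true_and]
    constructor
    · rintro ⟨hx1, hx2⟩
      have d1 := orderOf_dvd_of_pow_eq_one hx1
      have d2 := orderOf_dvd_of_pow_eq_one hx2
      exact orderOf_dvd_iff_pow_eq_one.mp (Nat.dvd_gcd d1 d2)
    · intro h
      obtain ⟨j1, hj1⟩ := Nat.gcd_dvd_left (r + 1) b
      obtain ⟨j2, hj2⟩ := Nat.gcd_dvd_right (r + 1) b
      exact ⟨by rw [hj1, pow_mul, h, one_pow], by rw [hj2, pow_mul, h, one_pow]⟩
  set gg := Nat.gcd (r + 1) (s - 1) with hgg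
  set hh := Nat.gcd (r + 1) (s + 1) with hhh
  have hdvdQ : ∀ b : ℕ, Nat.gcd (r + 1) b ∣ Fintype.card K - 1 := by
    intro b
    exact dvd_trans (Nat.gcd_dvd_left _ _) ⟨r - 1, by rw [hQ1]; ring⟩
  have hggpos : 0 < gg := Nat.gcd_pos_of_pos_left _ (by omega)
  have hhhpos : 0 < hh := Nat.gcd_pos_of_pos_left _ (by omega)
  have hggcard : (univ.filter fun x : K => x ^ (r + 1) = 1 ∧ x ^ (s - 1) = 1).card = gg := by
    rw [hgcd_filter (s - 1), hgg, card_pow_eq_one (by omega) (hdvdQ (s - 1))]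
  have hhhcard : (univ.filter fun x : K => x ^ (r + 1) = 1 ∧ x ^ (s + 1) = 1).card = hh := by
    rw [hgcd_filter (s + 1), hhh, card_pow_eq_one (by omega) (hdvdQ (s + 1))]
  have hggU : (U.filter fun z => z ^ s = z).card = gg := by
    rw [← hggcard]
    congr 1
    rw [hU, Finset.filter_filter]
    apply Finset.filter_congr
    intro x _
    constructor
    · rintro ⟨hx1, hx2⟩
      refine ⟨hx1, ?_⟩
      have hx0 : x ≠ 0 := by
        rintro rfl
        rw [zero_pow (by omega : r + 1 ≠ 0)] at hx1
        exact zero_ne_one hx1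
      have h3 : x ^ (s - 1) * x = 1 * x := by
        rw [one_mul, ← pow_succ, (by omega : s - 1 + 1 = s)]
        exact hx2
      exact mul_right_cancel₀ hx0 h3
    · rintro ⟨hx1, hx2⟩
      refine ⟨hx1, ?_⟩
      rw [← (by omega : s - 1 + 1 = s), pow_succ, hx2, one_mul]
  -- A₁
  set A₁ : Finset K := U.filter (fun cc => ¬ cc ^ (s + 1) = 1) with hA₁
  have hhcardU : (U.filter fun cc : K => cc ^ (s + 1) = 1).card = hh := by
    rw [← hhhcard]
    congr 1
    rw [hU, Finset.filter_filter]
  have hA₁c : A₁.card = (r + 1) - hh := by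
    rw [hA₁, Finset.filter_not, Finset.card_sdiff_of_subset (Finset.filter_subset _ _), hUcard, hhcardU]
  have hhle : hh ≤ r + 1 := Nat.le_of_dvd (by omega) (Nat.gcd_dvd_left _ _)
  have hggle : gg ≤ r + 1 := Nat.le_of_dvd (by omega) (Nat.gcd_dvd_left _ _)
  have hUne : (U.filter fun z => ¬ z ^ s = z).card = (r + 1) - gg := by
    rw [Finset.filter_not, Finset.card_sdiff_of_subset (Finset.filter_subset _ _), hUcard, hggU]
  -- A₁ elements have ncnt ≥ 2
  have hcop : Nat.Coprime s (r + 1) := by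
    have hc2 : Nat.Coprime 2 (r + 1) := by
      refine (Nat.prime_two.coprime_iff_not_dvd).mpr ?_
      omega
    rw [hs]
    exact Nat.Coprime.pow_left n hc2
  obtain ⟨e, -, he⟩ := Nat.exists_mul_mod_eq_one_of_coprime hcop (by omega)
  have hA₁2 : ∀ cc ∈ A₁, 2 ≤ ncnt cc := by
    intro cc hcc
    have hccU : cc ∈ U := Finset.mem_of_mem_filter cc hcc
    have hcc1 : cc ^ (r + 1) = 1 := (mem_filter.mp hccU).2
    have hccs : ¬ cc ^ (s + 1) = 1 := (mem_filter.mp hcc).2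
    set z₁ : K := cc ^ (r * e) with hz₁def
    have hse : s * e = (r + 1) * (s * e / (r + 1)) + 1 := by
      conv_lhs => rw [← Nat.div_add_mod (s * e) (r + 1)]
      rw [he]
    have hz₁U : z₁ ^ (r + 1) = 1 := by
      rw [hz₁def, ← pow_mul, show r * e * (r + 1) = (r + 1) * (r * e) from by ring,
        pow_mul, hcc1, one_pow]
    have hz₁s : z₁ ^ s = cc ^ r := by
      rw [hz₁def, ← pow_mul]
      have h5 : r * e * s = r + (r + 1) * (r * (s * e / (r + 1))) := by
        calc r * e * s = r * (s * e) := by ring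
        _ = r * ((r + 1) * (s * e / (r + 1)) + 1) := by rw [← hse]
        _ = r + (r + 1) * (r * (s * e / (r + 1))) := by ring
      rw [h5, pow_add, pow_mul, hcc1, one_pow, mul_one]
    have hgp_cc : cc ^ (s+1) + cc * cc ^ s + cc ^ r * cc + 1 = 0 := by
      linear_combination hcc1 + (cc ^ (s+1) + 1) * htwo
    have hgp_z₁ : z₁ ^ (s+1) + cc * z₁ ^ s + cc ^ r * z₁ + 1 = 0 := by
      linear_combination (z₁ + cc) * hz₁s + hcc1 + (cc ^ r * z₁ + 1) * htwo
    have hne : z₁ ≠ cc := by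
      intro heq
      apply hccs
      calc cc ^ (s + 1) = cc ^ s * cc := pow_succ cc s
      _ = z₁ ^ s * cc := by rw [heq]
      _ = cc ^ r * cc := by rw [hz₁s]
      _ = cc ^ (r + 1) := (pow_succ cc r).symm
      _ = 1 := hcc1
    have h2lt : 1 < ncnt cc := by
      simp only [hncnt]
      apply Finset.one_lt_card.mpr
      refine ⟨z₁, ?_, cc, ?_, hne⟩
      · simp only [hU, mem_filter, mem_univ, true_and]
        exact ⟨hz₁U, hgp_z₁⟩
      · simp only [hU, mem_filter, mem_univ, true_and]
        exact ⟨hcc1, hgp_cc⟩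
    omega
  -- disjointness
  have hdisj : Disjoint A₁ A₂ := by
    rw [Finset.disjoint_left]
    intro cc hc1 hc2
    have hcc1 : cc ^ (r + 1) = 1 := (mem_filter.mp (Finset.mem_of_mem_filter cc hc1)).2
    have hccs : ¬ cc ^ (s + 1) = 1 := (mem_filter.mp hc1).2
    have hccr : cc ^ r = cc := (mem_filter.mp hc2).2
    have hsq : (cc + 1) ^ 2 = 0 := by
      linear_combination hcc1 - cc * hccr + (cc + 1) * htwo
    have hcc1' : cc + 1 = 0 := pow_eq_zero_iff (by norm_num : 2 ≠ 0) |>.mp hsq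
    exact hccs (by rw [show cc = (1:K) from by linear_combination hcc1' - htwo, one_pow])
  -- assembly
  have hsplit := Finset.sum_sdiff (f := ncnt) (Finset.subset_univ (A₁ ∪ A₂))
  rw [Finset.sum_union hdisj] at hsplit
  have hrest : (univ \ (A₁ ∪ A₂)).card ≤ ∑ c ∈ univ \ (A₁ ∪ A₂), ncnt c := by
    calc (univ \ (A₁ ∪ A₂)).card = ∑ _c ∈ univ \ (A₁ ∪ A₂), 1 := Finset.card_eq_sum_ones _
    _ ≤ _ := Finset.sum_le_sum (fun c _ => hpos c)
  have hA₁sum : 2 * A₁.card ≤ ∑ c ∈ A₁, ncnt c := by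
    calc 2 * A₁.card = ∑ _c ∈ A₁, 2 := by rw [Finset.sum_const, smul_eq_mul, mul_comm]
    _ ≤ _ := Finset.sum_le_sum hA₁2
  have hcard_sdiff : (univ \ (A₁ ∪ A₂)).card + (A₁.card + A₂.card) = Fintype.card K := by
    have hle : (A₁ ∪ A₂).card ≤ Fintype.card K := by
      rw [← Finset.card_univ]
      exact Finset.card_le_card (Finset.subset_univ _)
    rw [Finset.card_sdiff_of_subset (Finset.subset_univ _), Finset.card_univ,
      Finset.card_union_of_disjoint hdisj]
    rw [Finset.card_union_of_disjoint hdisj] at hle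
    omega
  have hkey : r + 2 ≤ gg + hh := by
    have e1 : ∑ c : K, ncnt c = r * r + r := by rw [hsum_total]; ring
    have e2 : Fintype.card K = r * r := hcardrr
    rw [e2] at hcard_sdiff
    rw [e1] at hsplit
    rw [hA₂sum, hUne] at hsplit
    rw [hA₂card] at hcard_sdiff
    rw [hA₁c] at hcard_sdiff hA₁sum
    set RR := r * r with hRR
    omega
  -- number theory endgame
  have hggdvd : gg ∣ r + 1 := Nat.gcd_dvd_left _ _
  have hhhdvd : hh ∣ r + 1 := Nat.gcd_dvd_left _ _
  have hcopgh : Nat.gcd gg hh = 1 := by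
    have d1 : Nat.gcd gg hh ∣ s - 1 := (Nat.gcd_dvd_left gg hh).trans (Nat.gcd_dvd_right _ _)
    have d2 : Nat.gcd gg hh ∣ s + 1 := (Nat.gcd_dvd_right gg hh).trans (Nat.gcd_dvd_right _ _)
    have d3 : Nat.gcd gg hh ∣ 2 := by
      have hd := Nat.dvd_sub d2 d1
      rwa [(by omega : s + 1 - (s - 1) = 2)] at hd
    have d4 : Nat.gcd gg hh ∣ r + 1 := (Nat.gcd_dvd_left gg hh).trans hggdvd
    rcases (Nat.dvd_prime Nat.prime_two).mp d3 with h | h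
    · exact h
    · exfalso
      rw [h] at d4
      omega
  have hmul_dvd : gg * hh ∣ r + 1 := Nat.Coprime.mul_dvd_of_dvd_of_dvd hcopgh hggdvd hhhdvd
  set P := gg * hh with hP
  have hmule : P ≤ r + 1 := Nat.le_of_dvd (by omega) hmul_dvd
  have hone : gg = 1 ∨ hh = 1 := by
    by_contra hcon
    push_neg at hcon
    obtain ⟨hg1, hh1⟩ := hcon
    rcases le_total gg hh with hle | hle
    · have hx : 2 * hh ≤ P := by
        rw [hP]
        exact Nat.mul_le_mul (by omega) (le_refl hh)
      omega
    · have hx : gg * 2 ≤ P := by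
        rw [hP]
        exact Nat.mul_le_mul (le_refl gg) (by omega)
      omega
  have hdvd_s2 : (r + 1) ∣ s * s - 1 := by
    have hnat : (s - 1) * (s + 1) = s * s - 1 := natSq (by omega)
    rcases hone with h | h
    · have h1 : r + 1 ≤ hh := by omega
      have h2 : hh = r + 1 := Nat.le_antisymm hhle h1
      have hd : (r + 1) ∣ s + 1 := by rw [← h2, hhh]; exact Nat.gcd_dvd_right _ _
      rw [← hnat]
      exact Dvd.dvd.mul_left hd (s - 1)
    · have h1 : r + 1 ≤ gg := by omega
      have h2 : gg = r + 1 := Nat.le_antisymm hggle h1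
      have hd : (r + 1) ∣ s - 1 := by rw [← h2, hgg]; exact Nat.gcd_dvd_right _ _
      rw [← hnat]
      exact Dvd.dvd.mul_right hd (s + 1)
  have hss : s * s = 2 ^ (2 * n) := by rw [hs, ← pow_add, two_mul]
  apply hmn
  apply nt_dvd_imp m n hm hn
  rw [← hss]
  exact hdvd_s2

theorem main_aux (m n : ℕ) (hm : 1 ≤ m) (hn : 1 ≤ n)
    (K : Type) [Field K] [Fintype K] (hcard : Fintype.card K = 2 ^ (2 * m))
    (d : K) (hd : d ^ (2 ^ m) ≠ d) (c : K)
    (F : K → K)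
    (hF : ∀ x : K, F x = x * (x ^ (2 ^ n) + x ^ (2 ^ m) + c * x ^ (2 ^ m * 2 ^ n))
        + x ^ (2 ^ n) * (c ^ (2 ^ m) * x ^ (2 ^ m) + d * x ^ (2 ^ m * 2 ^ n))
        + x ^ ((2 ^ n + 1) * 2 ^ m))
    (Hc : ∀ lam a : K, a ≠ 0 → lam ^ (2 ^ m) = lam →
      (lam + lam ^ (2 ^ n)) *
        (a ^ (2 ^ n + 1) + a ^ (2 ^ m * 2 ^ n + 2 ^ m) + c * a ^ (2 ^ m * 2 ^ n + 1)
          + c ^ (2 ^ m) * a ^ (2 ^ m + 2 ^ n)) = 0 →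
      lam ^ (2 ^ n) = lam) :
    ∀ a : K, a ≠ 0 → ∀ b : K,
      b ∈ Set.range (fun x : K => F (x + a) + F x) →
      {x : K | F (x + a) + F x = b}.ncard = 2 ^ Nat.gcd m n := by
  classical
  haveI hch : CharP K 2 := char_two_of_card hm hcard
  haveI : Fact (Nat.Prime 2) := ⟨Nat.prime_two⟩
  have htwo : (2 : K) = 0 := by
    have h := CharP.cast_eq_zero K 2
    exact_mod_cast h
  set r := 2 ^ m with hr
  set s := 2 ^ n with hs
  set k := Nat.gcd m n with hk
  have hr2 : 2 ≤ r := by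
    rw [hr]
    calc (2:ℕ) = 2^1 := rfl
    _ ≤ 2^m := Nat.pow_le_pow_right (by norm_num) hm
  have hs2 : 2 ≤ s := by
    rw [hs]
    calc (2:ℕ) = 2^1 := rfl
    _ ≤ 2^n := Nat.pow_le_pow_right (by norm_num) hn
  have hfr : ∀ x y : K, (x + y) ^ r = x ^ r + y ^ r := by
    intro x y; rw [hr]; exact add_pow_char_pow x y 2 m
  have hfs : ∀ x y : K, (x + y) ^ s = x ^ s + y ^ s := by
    intro x y; rw [hs]; exact add_pow_char_pow x y 2 n
  have hfrs : ∀ x y : K, (x + y) ^ (r * s) = x ^ (r * s) + y ^ (r * s) := by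
    intro x y; rw [hr, hs, ← pow_add]; exact add_pow_char_pow x y 2 (m + n)
  have hrr : r * r = 2 ^ (2 * m) := by rw [hr, ← pow_add, two_mul]
  have hcardrr : Fintype.card K = r * r := by rw [hcard]; exact hrr.symm
  have hq : ∀ x : K, x ^ (r * r) = x := by
    intro x; rw [← hcardrr]; exact FiniteField.pow_card x
  have hxrr : ∀ x : K, (x ^ r) ^ r = x := by
    intro x; rw [← pow_mul]; exact hq x
  have hxrsr : ∀ x : K, (x ^ (r * s)) ^ r = x ^ s := by
    intro x
    rw [← pow_mul, show r * s * r = r * r * s from by ring, pow_mul, hq x]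
  have hxsr : ∀ x : K, (x ^ s) ^ r = x ^ (r * s) := by
    intro x; rw [← pow_mul, mul_comm]
  intro a ha b hb
  set v : K → K := fun x => x * a ^ r + x ^ r * a with hv
  set Pm : K → K := fun x => x * a ^ s + x ^ r * a ^ (r * s) + x * a ^ r + x ^ r * a
      + x ^ s * a + x ^ (r * s) * a ^ r
      + c * (x * a ^ (r * s) + x ^ (r * s) * a) + c ^ r * (x ^ s * a ^ r + x ^ r * a ^ s) with hPm
  set L : K → K := fun x => Pm x + d * (v x) ^ s with hL
  set G : K := a ^ (s + 1) + a ^ (r * s + r) + c * a ^ (r * s + 1) + c ^ r * a ^ (r + s) with hG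
  have hsplitpow : ∀ y : K, y ^ ((s + 1) * r) = y ^ (r * s) * y ^ r := by
    intro y; rw [← pow_add]; congr 1; ring
  have hvs : ∀ x : K, (x * a ^ r + x ^ r * a) ^ s = x ^ s * a ^ (r * s) + x ^ (r * s) * a ^ s := by
    intro x; rw [hfs, mul_pow, mul_pow, ← pow_mul, ← pow_mul]
  -- the master identity
  have Id1 : ∀ x : K, F (x + a) + F x = L x + F a := by
    intro x
    rw [hF (x + a), hF x, hF a]
    simp only [hL, hPm, hv]
    simp only [hsplitpow, hfs x a, hfr x a, hfrs x a, hvs x]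
    linear_combination htwo * (x * (x ^ s + x ^ r + c * x ^ (r * s))
      + x ^ s * (c ^ r * x ^ r + d * x ^ (r * s)) + x ^ (r * s) * x ^ r)
  have IdL : ∀ x y : K, L (x + y) = L x + L y := by
    intro x y
    simp only [hL, hPm, hv]
    simp only [hfr x y, hfs x y, hfrs x y]
    have e : (x + y) * a ^ r + (x ^ r + y ^ r) * a
        = (x * a ^ r + x ^ r * a) + (y * a ^ r + y ^ r * a) := by ring
    rw [e, hfs (x * a ^ r + x ^ r * a) (y * a ^ r + y ^ r * a)]
    ring
  have hPr : ∀ x : K, (Pm x) ^ r = Pm x := by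
    intro x
    simp only [hPm]
    simp only [hfr, mul_pow, hxrr, hxsr, hxrsr]
    ring
  have hvr : ∀ x : K, ((v x) ^ s) ^ r = (v x) ^ s := by
    intro x
    simp only [hv]
    rw [hvs x, hfr, mul_pow, mul_pow, hxsr, hxrsr, hxsr, hxrsr]
    ring
  have hsplitzero : ∀ x : K, L x = 0 → Pm x = 0 ∧ v x = 0 := by
    intro x hLx
    simp only [hL] at hLx
    by_cases hQ0 : (v x) ^ s = 0
    · have hv0 : v x = 0 := pow_eq_zero_iff (by omega : s ≠ 0) |>.mp hQ0
      refine ⟨?_, hv0⟩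
      rw [hQ0, mul_zero, add_zero] at hLx
      exact hLx
    · exfalso
      apply hd
      have hdq : d = Pm x / ((v x) ^ s) := by
        rw [eq_div_iff hQ0]
        linear_combination hLx - Pm x * htwo
      calc d ^ r = (Pm x / (v x) ^ s) ^ r := by rw [← hdq]
      _ = (Pm x) ^ r / ((v x) ^ s) ^ r := div_pow _ _ _
      _ = Pm x / (v x) ^ s := by rw [hPr x, hvr x]
      _ = d := hdq.symm
  have hkm : k ∣ m := by rw [hk]; exact Nat.gcd_dvd_left m n
  have hkn : k ∣ n := by rw [hk]; exact Nat.gcd_dvd_right m n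
  have hklam : ∀ lam : K, lam ^ (2 ^ k) = lam → lam ^ r = lam ∧ lam ^ s = lam := by
    intro lam hl
    obtain ⟨j1, hj1⟩ := hkm
    obtain ⟨j2, hj2⟩ := hkn
    constructor
    · rw [hr, hj1]; exact pow_two_pow_iter k j1 lam hl
    · rw [hs, hj2]; exact pow_two_pow_iter k j2 lam hl
  have hgcdlam : ∀ lam : K, lam ^ r = lam → lam ^ s = lam → lam ^ (2 ^ k) = lam := by
    intro lam h1 h2
    rw [hk]
    exact pow_two_pow_gcd m n lam h1 h2
  have id5 : ∀ lam : K, lam ^ r = lam → Pm (lam * a) = (lam + lam ^ s) * G := by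
    intro lam hl
    have h1 : (lam * a) ^ r = lam * a ^ r := by rw [mul_pow, hl]
    have h2 : (lam * a) ^ s = lam ^ s * a ^ s := mul_pow lam a s
    have h3 : (lam * a) ^ (r * s) = lam ^ s * a ^ (r * s) := by
      rw [mul_pow]
      congr 1
      rw [pow_mul, hl]
    simp only [hPm, hG]
    rw [h1, h2, h3]
    linear_combination (lam * a * a ^ r) * htwo
  have id6 : ∀ lam : K, lam ^ r = lam → v (lam * a) = 0 := by
    intro lam hl
    simp only [hv]
    rw [mul_pow, hl]
    linear_combination (lam * a * a ^ r) * htwo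
  have hker : {x : K | L x = 0} = (fun lam => lam * a) '' {lam : K | lam ^ (2 ^ k) = lam} := by
    ext x
    simp only [Set.mem_setOf_eq, Set.mem_image]
    constructor
    · intro hLx
      obtain ⟨hP0, hv0⟩ := hsplitzero x hLx
      set lam := x / a with hlam
      have hxa : x = lam * a := by rw [hlam]; field_simp
      have hva : x ^ r * a = x * a ^ r := by
        have h := hv0
        simp only [hv] at h
        linear_combination h - (x * a ^ r) * htwo
      have hlr : lam ^ r = lam := by
        rw [hlam, div_pow, div_eq_div_iff (pow_ne_zero _ ha) ha]
        exact hva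
      have hP' : (lam + lam ^ s) * G = 0 := by
        rw [← id5 lam hlr, ← hxa]
        exact hP0
      rw [hG] at hP'
      have hls : lam ^ s = lam := Hc lam a ha hlr hP'
      exact ⟨lam, hgcdlam lam hlr hls, hxa.symm⟩
    · rintro ⟨lam, hlam, rfl⟩
      obtain ⟨hlr, hls⟩ := hklam lam hlam
      simp only [hL]
      rw [id6 lam hlr, id5 lam hlr]
      rw [show lam + lam ^ s = 0 from by rw [hls]; exact CharTwo.add_self_eq_zero lam]
      rw [zero_mul, zero_pow (by omega : s ≠ 0), mul_zero, add_zero]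
  obtain ⟨x₀, hx₀⟩ := hb
  have hLx₀ : L x₀ + F a = b := by rw [← Id1 x₀]; exact hx₀
  have hfib : {x : K | F (x + a) + F x = b} = (fun w => x₀ + w) '' {w : K | L w = 0} := by
    ext x
    simp only [Set.mem_setOf_eq, Set.mem_image]
    constructor
    · intro hx
      refine ⟨x + x₀, ?_, by linear_combination (x₀ : K) * htwo⟩
      have hLx : L x + F a = b := by rw [← Id1 x]; exact hx
      rw [IdL x x₀]
      have he : L x = L x₀ := by linear_combination hLx - hLx₀
      rw [he]
      exact CharTwo.add_self_eq_zero _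
    · rintro ⟨w, hw, rfl⟩
      rw [Id1 (x₀ + w), IdL x₀ w, hw, add_zero]
      exact hLx₀
  rw [hfib, Set.ncard_image_of_injective _ (add_right_injective x₀), hker,
    Set.ncard_image_of_injective _ (mul_left_injective₀ ha)]
  have hsetfin : {lam : K | lam ^ (2 ^ k) = lam}
      = ↑(univ.filter fun lam : K => lam ^ (2 ^ k) = lam) := by
    ext lam; simp
  rw [hsetfin, Set.ncard_coe_finset]
  have hk1 : 1 ≤ k := by
    have hne : k ≠ 0 := by
      rw [hk]; intro h0
      rcases Nat.gcd_eq_zero_iff.mp h0 with ⟨h', _⟩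
      omega
    omega
  have hdvd : (2 ^ k - 1 : ℕ) ∣ Fintype.card K - 1 := by
    rw [hcard]
    obtain ⟨j, hj⟩ : k ∣ 2 * m := Dvd.dvd.mul_left hkm 2
    rw [hj]
    exact two_pow_sub_one_dvd k j
  refine card_pow_eq_self ?_ hdvd
  calc (2:ℕ) = 2^1 := rfl
  _ ≤ 2^k := Nat.pow_le_pow_right (by norm_num) hk1


/-- Theorem 3: for all `m, n ≥ 1` and every `d ∉ F_r`, there exists `c ∈ F_{r^2}` such
that every nonzero derivative of `F` is a `2^{gcd(m,n)}`-to-one map on `F_{r^2}`. -/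
theorem stmt18 (m n : ℕ) (hm : 1 ≤ m) (hn : 1 ≤ n)
    (K : Type) [Field K] [Fintype K] (hcard : Fintype.card K = 2 ^ (2 * m))
    (d : K) (hd : d ^ (2 ^ m) ≠ d) :
    ∃ c : K,
      let r := 2 ^ m; let s := 2 ^ n
      let F : K → K := fun x =>
        x * (x ^ s + x ^ r + c * x ^ (r * s)) + x ^ s * (c ^ r * x ^ r + d * x ^ (r * s))
          + x ^ ((s + 1) * r)
      ∀ a : K, a ≠ 0 → ∀ b : K, b ∈ Set.range (fun x => F (x + a) + F x) →
        {x : K | F (x + a) + F x = b}.ncard = 2 ^ Nat.gcd m n := by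
  classical
  haveI hch : CharP K 2 := char_two_of_card hm hcard
  have htwo : (2 : K) = 0 := by
    have h := CharP.cast_eq_zero K 2
    exact_mod_cast h
  by_cases hmn : m ∣ n
  · refine ⟨0, ?_⟩
    intro r s F
    refine main_aux m n hm hn K hcard d hd 0 F (fun x => rfl) ?_
    intro lam a _ hl _
    obtain ⟨j, hj⟩ := hmn
    rw [hj]
    exact pow_two_pow_iter m j lam hl
  · obtain ⟨c, hc⟩ := exists_good_c m n hm hn hmn K hcard
    refine ⟨c, ?_⟩
    intro r s F
    refine main_aux m n hm hn K hcard d hd c F (fun x => rfl) ?_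
    intro lam a ha hl hprod
    have hG0 : a ^ (2 ^ n + 1) + a ^ (2 ^ m * 2 ^ n + 2 ^ m) + c * a ^ (2 ^ m * 2 ^ n + 1)
        + c ^ (2 ^ m) * a ^ (2 ^ m + 2 ^ n) ≠ 0 := by
      obtain ⟨rr, hrr⟩ : ∃ rr, 2 ^ m = rr + 1 :=
        ⟨2 ^ m - 1, by have := Nat.one_le_two_pow (n := m); omega⟩
      have hcard' : Fintype.card K = (rr + 1) * (rr + 1) := by
        rw [hcard, two_mul, pow_add, hrr]
      have hzU : (a ^ rr) ^ (2 ^ m + 1) = 1 := by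
        have h1 : (a ^ rr) ^ (2 ^ m + 1) * a = 1 * a := by
          rw [one_mul, ← pow_mul, ← pow_succ]
          rw [show rr * (2 ^ m + 1) + 1 = (rr + 1) * (rr + 1) from by rw [hrr]; ring]
          rw [← hcard']
          exact FiniteField.pow_card a
        exact mul_right_cancel₀ ha h1
      have hfac : a ^ (2 ^ n + 1) + a ^ (2 ^ m * 2 ^ n + 2 ^ m) + c * a ^ (2 ^ m * 2 ^ n + 1)
          + c ^ (2 ^ m) * a ^ (2 ^ m + 2 ^ n)
          = a ^ (2 ^ n + 1) * ((a ^ rr) ^ (2 ^ n + 1) + c * (a ^ rr) ^ (2 ^ n)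
              + c ^ (2 ^ m) * (a ^ rr) + 1) := by
        rw [hrr]
        ring
      rw [hfac]
      exact mul_ne_zero (pow_ne_zero _ ha) (hc (a ^ rr) hzU)
    rcases mul_eq_zero.mp hprod with h | h
    · linear_combination h - lam * htwo
    · exact absurd h hG0
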